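/- Let G and N be groups and Φ : G →* MulAut N a group homomorphism. Let F_Φ : SingleObj G ⥤ Cat be the functor sending the unique object of SingleObj G to Cat.of (SingleObj N) and sending each endomorphism g : G to the endofunctor of SingleObj N induced by the monoid homomorphism underlying Φ g. Then the endomorphism monoid of the unique object of the Grothendieck construction Grothendieck F_Φ is isomorphic, as a monoid, to the semidirect product N ⋊[Φ] G. -/

import Mathlib

open CategoryTheory

/-- The functor `SingleObj G ⥤ Cat` sending the unique object to `Cat.of (SingleObj N)`
and each `g : G` to the endofunctor of `SingleObj N` induced by the monoid homomorphism
underlying `Φ g`. -/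
def semidirectActionFunctor {G N : Type*} [Group G] [Group N] (Φ : G →* MulAut N) :
    SingleObj G ⥤ Cat where
  obj _ := Cat.of (SingleObj N)
  map g := (SingleObj.mapHom N N (Φ g).toMonoidHom).toCatHom
  map_id _ := by
    show (SingleObj.mapHom N N (Φ 1).toMonoidHom).toCatHom = _
    rw [map_one]
    rfl
  map_comp f g := by
    show (SingleObj.mapHom N N (Φ (g * f)).toMonoidHom).toCatHom = _
    rw [map_mul]
    rfl

theorem end_grothendieck_mulEquiv_semidirectProduct
    {G N : Type*} [Group G] [Group N] (Φ : G →* MulAut N) :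
    Nonempty
      (End ({ base := SingleObj.star G, fiber := SingleObj.star N } :
          Grothendieck (semidirectActionFunctor Φ)) ≃* (N ⋊[Φ] G)) := by
  constructor
  refine
    { toFun := fun f => ⟨f.fiber, f.base⟩
      invFun := fun p => ⟨p.right, p.left⟩
      left_inv := fun f => rfl
      right_inv := fun p => rfl
      map_mul' := fun f g => ?_ }
  ext
  · show (g ≫ f).fiber = _
    show (CategoryStruct.comp (X := SingleObj.star N) (Y := SingleObj.star N)
      (Z := SingleObj.star N) (eqToHom rfl) _) = _
    rw [eqToHom_refl]
    erw [Category.id_comp, SingleObj.comp_as_mul]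
    rfl
  · rfl
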